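/- arXiv:1905.07741 — 2 statements merged into one kernel-verified Lean document; each statement's English description precedes it below -/
import Mathlib

section
/- For all natural numbers α, β, k, one has the identity ∑_{j=0}^{k} ((-2)^j / j!) · C(k, k-j) · ∑_{n=0}^{j} C(j,n) · Γ(1/2 + n + α) · Γ(1/2 + j - n + β) = (Γ(α+1/2)·Γ(β+1/2) / Γ(α+β+1)) · ∑_{j=0}^{k} ((-2)^j / j!) · C(k, k-j) · Γ(α+β+1+j). -/
open Finset

lemma key_gamma_sum (a b : ℝ) (ha : 0 < a) (hb : 0 < b) (j : ℕ) :
    ∑ n ∈ Finset.range (j + 1), (j.choose n : ℝ) * Real.Gamma (a + n) * Real.Gamma (b + j - n)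
      = Real.Gamma a * Real.Gamma b / Real.Gamma (a + b) * Real.Gamma (a + b + j) := by
  induction j with
  | zero =>
      simp only [zero_add, Finset.sum_range_one, Nat.choose_self, Nat.cast_one, Nat.cast_zero,
        add_zero, sub_zero, one_mul]
      field_simp [(Real.Gamma_pos_of_pos (by positivity : (0:ℝ) < a + b)).ne']
  | succ j ih =>
      have pascal : ∑ n ∈ Finset.range (j + 2), ((j+1).choose n : ℝ) *
            Real.Gamma (a + n) * Real.Gamma (b + (j+1 : ℕ) - n)
          = (∑ n ∈ Finset.range (j + 1), (j.choose n : ℝ) *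
              Real.Gamma (a + n) * Real.Gamma (b + (j+1 : ℕ) - n))
            + ∑ n ∈ Finset.range (j + 1), (j.choose n : ℝ) *
              Real.Gamma (a + (n+1 : ℕ)) * Real.Gamma (b + (j+1 : ℕ) - (n+1 : ℕ)) := by
        rw [Finset.sum_range_succ' (fun n => ((j+1).choose n : ℝ) *
            Real.Gamma (a + n) * Real.Gamma (b + (j+1 : ℕ) - n))]
        rw [Finset.sum_range_succ' (fun n => ((j).choose n : ℝ) *
            Real.Gamma (a + n) * Real.Gamma (b + (j+1 : ℕ) - n))]
        simp only [Nat.choose_succ_succ, Nat.cast_add, Nat.choose_zero_right, Nat.cast_one]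
        push_cast
        rw [Finset.sum_congr rfl (fun n _ => by ring :
          ∀ n ∈ Finset.range (j+1), ((j.choose n : ℝ) + (j.choose (n+1) : ℝ)) *
            Real.Gamma (a + ((n:ℝ)+1)) * Real.Gamma (b + ((j:ℝ)+1) - ((n:ℝ)+1))
            = (j.choose n : ℝ) * Real.Gamma (a + ((n:ℝ)+1)) * Real.Gamma (b + ((j:ℝ)+1) - ((n:ℝ)+1))
              + (j.choose (n+1) : ℝ) * Real.Gamma (a + ((n:ℝ)+1)) * Real.Gamma (b + ((j:ℝ)+1) - ((n:ℝ)+1)))]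
        rw [Finset.sum_add_distrib]
        rw [Finset.sum_range_succ (fun n => (j.choose (n+1) : ℝ) *
            Real.Gamma (a + ((n:ℝ)+1)) * Real.Gamma (b + ((j:ℝ)+1) - ((n:ℝ)+1)))]
        simp [Nat.choose_succ_self]
        ring
      have hrec : ∑ n ∈ Finset.range (j + 2), ((j+1).choose n : ℝ) *
            Real.Gamma (a + n) * Real.Gamma (b + (j+1 : ℕ) - n)
          = (a + b + j) * ∑ n ∈ Finset.range (j + 1), (j.choose n : ℝ) *
              Real.Gamma (a + n) * Real.Gamma (b + j - n) := by
        rw [pascal, Finset.mul_sum, ← Finset.sum_add_distrib]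
        refine Finset.sum_congr rfl fun n hn => ?_
        have hn' : (n : ℝ) ≤ j := by
          exact_mod_cast Nat.le_of_lt_succ (Finset.mem_range.mp hn)
        have h1 : b + (j+1 : ℕ) - n = (b + j - n) + 1 := by push_cast; ring
        have h2 : a + (n+1 : ℕ) = (a + n) + 1 := by push_cast; ring
        have h3 : b + (j+1 : ℕ) - (n+1 : ℕ) = b + j - n := by push_cast; ring
        rw [h1, h2, h3, Real.Gamma_add_one (by nlinarith : (b + (j:ℝ) - n) ≠ 0),
          Real.Gamma_add_one (by positivity : (a + (n:ℝ)) ≠ 0)]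
        ring
      push_cast at hrec ⊢
      rw [hrec, ih, show a + b + ((j:ℝ) + 1) = (a + b + j) + 1 by ring,
        Real.Gamma_add_one (by positivity : (a + b + (j:ℝ)) ≠ 0)]
      ring

theorem stmt0 (α β k : ℕ) :
    ∑ j ∈ Finset.range (k + 1), ((-2 : ℝ) ^ j / (Nat.factorial j)) * (k.choose (k - j)) *
      ∑ n ∈ Finset.range (j + 1), (j.choose n) *
        Real.Gamma (1 / 2 + n + α) * Real.Gamma (1 / 2 + (j : ℝ) - n + β)
    = (Real.Gamma ((α : ℝ) + 1 / 2) * Real.Gamma ((β : ℝ) + 1 / 2) /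
        Real.Gamma ((α : ℝ) + β + 1)) *
      ∑ j ∈ Finset.range (k + 1), ((-2 : ℝ) ^ j / (Nat.factorial j)) * (k.choose (k - j)) *
        Real.Gamma ((α : ℝ) + β + 1 + j) := by
  rw [Finset.mul_sum]
  refine Finset.sum_congr rfl fun j _ => ?_
  have ha : (0:ℝ) < α + 1/2 := by positivity
  have hb : (0:ℝ) < β + 1/2 := by positivity
  have h := key_gamma_sum ((α:ℝ) + 1/2) ((β:ℝ) + 1/2) ha hb j
  have hinner : ∑ n ∈ Finset.range (j + 1), ((j.choose n : ℝ)) *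
        Real.Gamma (1 / 2 + n + α) * Real.Gamma (1 / 2 + (j : ℝ) - n + β)
      = ∑ n ∈ Finset.range (j + 1), (j.choose n : ℝ) *
        Real.Gamma ((α:ℝ) + 1/2 + n) * Real.Gamma ((β:ℝ) + 1/2 + j - n) := by
    refine Finset.sum_congr rfl fun n _ => ?_
    rw [show (1:ℝ)/2 + n + α = (α:ℝ) + 1/2 + n by ring,
      show (1:ℝ)/2 + (j:ℝ) - n + β = (β:ℝ) + 1/2 + j - n by ring]
  rw [hinner, h, show (α:ℝ) + 1/2 + ((β:ℝ) + 1/2) = (α:ℝ) + β + 1 by ring]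
  ring
end

section
/- For natural numbers N ≥ 1 and d ≥ 1, define C_{N-1,j} = ∑_{m=j}^{N-1} 2^{-m} C(d-1+m, d-1+j) for 0 ≤ j ≤ N-1. Then ∑_{j=0}^{N-1} (-1)^j C_{N-1,j} · #{k ∈ ℕ^d : |k| = j} = ∑_{j=0}^{N-1} (-1)^j C_{N-1,j} · C(j+d-1, d-1) = 1. -/
open Finset

lemma card_sum_count {d : ℕ} (m : Multiset (Fin d)) :
    ∑ i : Fin d, m.count i = Multiset.card m := by
  rw [← Multiset.toFinset_sum_count_eq m]
  exact (Finset.sum_subset (Finset.subset_univ _) (by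
    intro i _ hi
    simpa [Multiset.count_eq_zero] using fun h => hi (Multiset.mem_toFinset.mpr h))).symm

lemma card_adt (d j : ℕ) :
    (Finset.Nat.antidiagonalTuple d j).card = Nat.multichoose d j := by
  classical
  rw [← Fintype.card_coe, ← Sym.card_sym_fin_eq_multichoose d j]
  have e1 : {x : Fin d → ℕ // x ∈ Finset.Nat.antidiagonalTuple d j}
      ≃ {f : Fin d →₀ ℕ // ∑ i, f i = j} :=
    Equiv.subtypeEquiv Finsupp.equivFunOnFinite.symm (fun x => by
      simp [Finset.Nat.mem_antidiagonalTuple, eq_comm])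
  have e2 : {f : Fin d →₀ ℕ // ∑ i, f i = j}
      ≃ {m : Multiset (Fin d) // Multiset.card m = j} :=
    (Equiv.subtypeEquiv Multiset.toFinsupp.toEquiv (fun m => by
      simp only [AddEquiv.toEquiv_eq_coe, EquivLike.coe_coe, Multiset.toFinsupp_apply]
      rw [card_sum_count])).symm
  exact Fintype.card_congr (e1.trans e2)

lemma hcard (d j : ℕ) (hd : 1 ≤ d) :
    (Finset.Nat.antidiagonalTuple d j).card = (j + d - 1).choose (d - 1) := by
  rw [card_adt, Nat.multichoose_eq]
  have h1 : d + j - 1 = j + d - 1 := by omega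
  have h2 := Nat.choose_symm (n := j + d - 1) (k := j) (by omega)
  have h3 : j + d - 1 - j = d - 1 := by omega
  rw [h1, ← h2, h3]

lemma halt (m : ℕ) : ∑ j ∈ Finset.range (m + 1), (-1 : ℝ) ^ j * (m.choose j : ℕ)
    = if m = 0 then 1 else 0 := by
  rcases Nat.eq_zero_or_pos m with h | h
  · subst h; simp
  · rw [if_neg (by omega)]
    have h := Int.alternating_sum_range_choose_of_ne (n := m) (by omega)
    have h2 := congrArg (fun z : ℤ => (z : ℝ)) h
    push_cast at h2
    convert h2 using 2

/-- The spectrogram-expansion coefficients `C_{N-1,j}` in dimension `d`. -/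
noncomputable def specCoeff (d N j : ℕ) : ℝ :=
  ∑ m ∈ Finset.Icc j (N - 1), ((2 : ℝ) ^ m)⁻¹ * ((d - 1 + m).choose (d - 1 + j))

theorem stmt15 (N d : ℕ) (hN : 1 ≤ N) (hd : 1 ≤ d) :
    (∑ j ∈ Finset.range N, (-1 : ℝ) ^ j * specCoeff d N j *
        ((Finset.Nat.antidiagonalTuple d j).card : ℝ)
      = ∑ j ∈ Finset.range N, (-1 : ℝ) ^ j * specCoeff d N j *
        (((j + d - 1).choose (d - 1) : ℕ) : ℝ)) ∧
    (∑ j ∈ Finset.range N, (-1 : ℝ) ^ j * specCoeff d N j *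
        (((j + d - 1).choose (d - 1) : ℕ) : ℝ) = 1) := by
  constructor
  · exact Finset.sum_congr rfl fun j _ => by rw [hcard d j hd]
  · have key : ∀ j m : ℕ, j ≤ m →
        ((d - 1 + m).choose (d - 1 + j) * (j + d - 1).choose (d - 1) : ℕ)
          = (d - 1 + m).choose (d - 1) * m.choose j := by
      intro j m hjm
      have h1 : j + d - 1 = d - 1 + j := by omega
      rw [h1]
      have := Nat.choose_mul (n := d - 1 + m) (k := d - 1 + j) (s := d - 1)
        (by omega)
      rw [this]
      congr 2 <;> omega
    calc ∑ j ∈ Finset.range N, (-1 : ℝ) ^ j * specCoeff d N j *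
            (((j + d - 1).choose (d - 1) : ℕ) : ℝ)
        = ∑ j ∈ Finset.range N, ∑ m ∈ Finset.Icc j (N - 1),
            (-1 : ℝ) ^ j * (((2 : ℝ) ^ m)⁻¹ * ((d - 1 + m).choose (d - 1 + j))) *
            (((j + d - 1).choose (d - 1) : ℕ) : ℝ) := by
          refine Finset.sum_congr rfl fun j _ => ?_
          rw [specCoeff, Finset.mul_sum, Finset.sum_mul]
      _ = ∑ m ∈ Finset.range N, ∑ j ∈ Finset.range (m + 1),
            (-1 : ℝ) ^ j * (((2 : ℝ) ^ m)⁻¹ * ((d - 1 + m).choose (d - 1 + j))) *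
            (((j + d - 1).choose (d - 1) : ℕ) : ℝ) := by
          rw [Finset.sum_comm']
          intro m j
          simp only [Finset.mem_range, Finset.mem_Icc]
          omega
      _ = ∑ m ∈ Finset.range N, ((2 : ℝ) ^ m)⁻¹ * (((d - 1 + m).choose (d - 1) : ℕ) : ℝ) *
            ∑ j ∈ Finset.range (m + 1), (-1 : ℝ) ^ j * (m.choose j : ℕ) := by
          refine Finset.sum_congr rfl fun m hm => ?_
          rw [Finset.mul_sum]
          refine Finset.sum_congr rfl fun j hj => ?_
          have hjm : j ≤ m := by simpa [Nat.lt_succ_iff] using hj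
          have h : (((d - 1 + m).choose (d - 1 + j) : ℝ)) * (((j + d - 1).choose (d - 1) : ℕ) : ℝ)
              = (((d - 1 + m).choose (d - 1) : ℕ) : ℝ) * ((m.choose j : ℕ) : ℝ) := by
            rw [← Nat.cast_mul, ← Nat.cast_mul, key j m hjm]
          linear_combination ((2 : ℝ) ^ m)⁻¹ * (-1 : ℝ) ^ j * h
      _ = 1 := by
          rw [Finset.sum_congr rfl fun m _ => by rw [halt m]]
          simp only [mul_ite, mul_one, mul_zero]
          rw [Finset.sum_ite_eq' (Finset.range N) 0]
          have h0 : (0 : ℕ) ∈ Finset.range N := Finset.mem_range.mpr (by omega)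
          rw [if_pos h0]
          simp
end
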